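/- Let λ > 0 and let Λ = diag(λ₁,…,λ_N) be a diagonal matrix with λ = λ₁ ≤ λ₂ ≤ ⋯ ≤ λ_N. Let T ∈ ℕ, let x₁,…,x_T ∈ ℝ^N with ‖x_t‖₂ ≤ 1 for all t, and set V_{T+1} = Λ + Σ_{t=1}^{T} x_t x_tᵀ. If d is the effective dimension, then log(det(V_{T+1})/det(Λ)) ≤ 2·d·log(1 + T/λ). -/

import Mathlib

open Matrix

lemma psd_vecMulVec {n : Type*} [Fintype n] (v : n → ℝ) :
    (Matrix.vecMulVec v v).PosSemidef := by
  rw [Matrix.vecMulVec_eq Unit]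
  have h : (Matrix.replicateCol Unit v)ᴴ = Matrix.replicateRow Unit v := by
    rw [Matrix.conjTranspose_replicateCol]; simp
  rw [← h]
  exact Matrix.posSemidef_self_mul_conjTranspose _

lemma psd_of_det_ne_zero' {n : Type*} [Fintype n] [DecidableEq n] {M : Matrix n n ℝ}
    (hM : M.PosSemidef) (h : M.det ≠ 0) : M.PosDef := by
  refine Matrix.PosDef.of_dotProduct_mulVec_pos hM.1 fun y hy => ?_
  rcases (hM.dotProduct_mulVec_nonneg y).lt_or_eq with h' | h'
  · exact h'
  · exfalso
    have h0 : M *ᵥ y = 0 := (hM.dotProduct_mulVec_zero_iff y).mp h'.symm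
    have hinj : Function.Injective (M.mulVec) :=
      Matrix.mulVec_injective_iff_isUnit.mpr ((Matrix.isUnit_iff_isUnit_det M).mpr h.isUnit)
    exact hy (hinj (by simpa using h0))

lemma hadamard_det : ∀ (n : ℕ) (M : Matrix (Fin n) (Fin n) ℝ), M.PosSemidef →
    M.det ≤ ∏ i, M i i := by
  intro n
  induction n with
  | zero => intro M hM; simp
  | succ n ih =>
    intro M hM
    have hdiag : ∀ i, 0 ≤ M i i := by
      intro i
      exact hM.diag_nonneg
    rcases eq_or_ne M.det 0 with h0 | h0
    · rw [h0]; exact Finset.prod_nonneg fun i _ => hdiag i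
    have hPD : M.PosDef := psd_of_det_ne_zero' hM h0
    -- reindex
    let e : Fin 1 ⊕ Fin n ≃ Fin (n + 1) := finSumFinEquiv.trans (finCongr (Nat.add_comm 1 n))
    set P : Matrix (Fin 1 ⊕ Fin n) (Fin 1 ⊕ Fin n) ℝ := M.submatrix e e with hPdef
    have hP : P.PosSemidef := hM.submatrix e
    set A := P.toBlocks₁₁ with hA
    set B := P.toBlocks₁₂ with hB
    set D := P.toBlocks₂₂ with hD
    have hC : P.toBlocks₂₁ = Bᴴ := by
      ext j i
      simpa [hB, Matrix.toBlocks₂₁, Matrix.toBlocks₁₂, Matrix.conjTranspose_apply] using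
        congrFun (congrFun hP.1.symm (Sum.inr j)) (Sum.inl i)
    have hPblocks : P = Matrix.fromBlocks A B Bᴴ D := by
      rw [← hC, hA, hB, hD, Matrix.fromBlocks_toBlocks]
    have ha : 0 < P (Sum.inl 0) (Sum.inl 0) := by
      have := hPD.diag_pos (i := e (Sum.inl 0))
      simpa [dotProduct_single, Matrix.mulVec_single, hPdef] using this
    have hApd : A.PosDef := by
      refine Matrix.PosDef.of_dotProduct_mulVec_pos ?_ fun y hy => ?_
      · ext i j; fin_cases i; fin_cases j; simp [hA, Matrix.conjTranspose_apply]
      · have hy0 : y 0 ≠ 0 := by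
          intro h; apply hy; ext i; fin_cases i; exact h
        have : star y ⬝ᵥ A *ᵥ y = P (Sum.inl 0) (Sum.inl 0) * (y 0 * y 0) := by
          simp [dotProduct, Matrix.mulVec, Fin.sum_univ_one, hA, Matrix.toBlocks₁₁]
          ring
        rw [this]
        exact mul_pos ha (mul_self_pos.mpr hy0)
    have hAinv : Invertible A := by
      apply Matrix.invertibleOfIsUnitDet
      have : A.det = P (Sum.inl 0) (Sum.inl 0) := by
        rw [Matrix.det_fin_one]; rfl
      rw [this]; exact ha.ne'.isUnit
    have hS : (D - Bᴴ * A⁻¹ * B).PosSemidef :=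
      (Matrix.PosDef.fromBlocks₁₁ B D hApd).mp (hPblocks ▸ hP)
    have hSdiag : ∀ j, 0 ≤ (D - Bᴴ * A⁻¹ * B) j j := by
      intro j
      exact hS.diag_nonneg
    have hBAB : (Bᴴ * A⁻¹ * B).PosSemidef := by
      exact (hApd.inv).posSemidef.conjTranspose_mul_mul_same B
    have hBABdiag : ∀ j, 0 ≤ (Bᴴ * A⁻¹ * B) j j := by
      intro j
      exact hBAB.diag_nonneg
    have hdetP : P.det = A.det * (D - Bᴴ * A⁻¹ * B).det := by
      rw [hPblocks]
      have : A⁻¹ = ⅟A := (Matrix.invOf_eq_nonsing_inv A).symm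
      rw [this]
      exact Matrix.det_fromBlocks₁₁ A B Bᴴ D
    have hdetM : M.det = P.det := (Matrix.det_submatrix_equiv_self e M).symm ▸ rfl
    have hdetS : (D - Bᴴ * A⁻¹ * B).det ≤ ∏ j, (D - Bᴴ * A⁻¹ * B) j j := ih _ hS
    have hprodS : ∏ j, (D - Bᴴ * A⁻¹ * B) j j ≤ ∏ j, D j j := by
      apply Finset.prod_le_prod (fun j _ => hSdiag j)
      intro j _
      have := hBABdiag j
      simp only [Matrix.sub_apply]
      linarith
    have hdetA : A.det = P (Sum.inl 0) (Sum.inl 0) := by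
      rw [Matrix.det_fin_one]; rfl
    have hprodM : ∏ i, M i i = P (Sum.inl 0) (Sum.inl 0) * ∏ j, D j j := by
      have h1 : ∏ i, M i i = ∏ s : Fin 1 ⊕ Fin n, M (e s) (e s) :=
        (Equiv.prod_comp e (fun i => M i i)).symm
      rw [h1, Fintype.prod_sum_type, Fin.prod_univ_one]
      rfl
    calc M.det = P.det := hdetM
      _ = A.det * (D - Bᴴ * A⁻¹ * B).det := hdetP
      _ ≤ A.det * ∏ j, D j j := by
          rw [hdetA]
          exact mul_le_mul_of_nonneg_left (hdetS.trans hprodS) ha.le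
      _ = ∏ i, M i i := by rw [hprodM, hdetA]


/-- Let `λ > 0`, `Λ = diag(λ₁,…,λ_N)` with `λ = λ₁ ≤ ⋯ ≤ λ_N`, `T ∈ ℕ`,
`x₁,…,x_T ∈ ℝ^N` with `‖x_t‖₂ ≤ 1`, and `V_{T+1} = Λ + ∑_{t=1}^T x_t x_tᵀ`. If `d` is the
effective dimension (the largest `d ∈ {1,…,N}` with `(d−1)λ_d ≤ T/log(1+T/λ)`), then
`log(det(V_{T+1})/det(Λ)) ≤ 2·d·log(1 + T/λ)`. -/
theorem statement4 {N : ℕ} (lam : ℝ) (hlam : 0 < lam) (lamSeq : ℕ → ℝ)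
    (hfirst : lamSeq 1 = lam)
    (hmono : ∀ i j : ℕ, 1 ≤ i → i ≤ j → j ≤ N → lamSeq i ≤ lamSeq j)
    (T : ℕ) (hT : 1 ≤ T)
    (x : ℕ → Fin N → ℝ)
    (hx : ∀ t ∈ Finset.Icc 1 T, Real.sqrt (∑ i, x t i ^ 2) ≤ 1)
    (d : ℕ) (hd1 : 1 ≤ d) (hdN : d ≤ N)
    (hdle : ((d : ℝ) - 1) * lamSeq d ≤ (T : ℝ) / Real.log (1 + T / lam))
    (hdmax : ∀ d' : ℕ, 1 ≤ d' → d' ≤ N →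
      ((d' : ℝ) - 1) * lamSeq d' ≤ (T : ℝ) / Real.log (1 + T / lam) → d' ≤ d) :
    Real.log
        ((Matrix.diagonal (fun i : Fin N => lamSeq ((i : ℕ) + 1)) +
            ∑ t ∈ Finset.Icc 1 T, Matrix.vecMulVec (x t) (x t)).det /
          (Matrix.diagonal (fun i : Fin N => lamSeq ((i : ℕ) + 1))).det) ≤
      2 * d * Real.log (1 + T / lam) := by
  have hTpos : (0:ℝ) < T := by exact_mod_cast hT
  set L := Real.log (1 + (T:ℝ) / lam) with hLdef
  have hL : 0 < L := Real.log_pos (by have := div_pos hTpos hlam; linarith)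
  have hlamF : ∀ i : Fin N, lam ≤ lamSeq ((i:ℕ) + 1) := by
    intro i
    rw [← hfirst]
    exact hmono 1 ((i:ℕ)+1) le_rfl (by omega) (by omega)
  have hlamFpos : ∀ i : Fin N, 0 < lamSeq ((i:ℕ) + 1) := fun i => lt_of_lt_of_le hlam (hlamF i)
  set Λ : Matrix (Fin N) (Fin N) ℝ := Matrix.diagonal (fun i : Fin N => lamSeq ((i:ℕ) + 1))
    with hΛdef
  set S : Matrix (Fin N) (Fin N) ℝ := ∑ t ∈ Finset.Icc 1 T, Matrix.vecMulVec (x t) (x t)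
    with hSdef
  have hS_psd : S.PosSemidef := by
    rw [hSdef]
    exact Finset.sum_induction (fun t => Matrix.vecMulVec (x t) (x t)) Matrix.PosSemidef
      (fun a b ha hb => ha.add hb) Matrix.PosSemidef.zero (fun t _ => psd_vecMulVec (x t))
  have hΛ_pd : Λ.PosDef := Matrix.posDef_diagonal_iff.mpr fun i => hlamFpos i
  have hV_pd : (Λ + S).PosDef := hΛ_pd.add_posSemidef hS_psd
  set sval : Fin N → ℝ := fun i => ∑ t ∈ Finset.Icc 1 T, x t i ^ 2 with hsvaldef
  have hsval_nonneg : ∀ i, 0 ≤ sval i :=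
    fun i => Finset.sum_nonneg fun t _ => sq_nonneg _
  have hVdiag : ∀ i, (Λ + S) i i = lamSeq ((i:ℕ) + 1) + sval i := by
    intro i
    simp [hΛdef, hSdef, hsvaldef, Matrix.add_apply, Matrix.diagonal_apply_eq,
      Matrix.sum_apply, Matrix.vecMulVec_apply, pow_two]
  have hsum_sval : ∑ i, sval i ≤ (T:ℝ) := by
    rw [hsvaldef]
    rw [Finset.sum_comm]
    calc ∑ t ∈ Finset.Icc 1 T, ∑ i, x t i ^ 2 ≤ ∑ t ∈ Finset.Icc 1 T, (1:ℝ) := by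
          apply Finset.sum_le_sum
          intro t ht
          have h1 := hx t ht
          have h2 : 0 ≤ ∑ i, x t i ^ 2 := Finset.sum_nonneg fun i _ => sq_nonneg _
          nlinarith [Real.sq_sqrt h2, Real.sqrt_nonneg (∑ i, x t i ^ 2)]
      _ = (T:ℝ) := by
          rw [Finset.sum_const, Nat.card_Icc]
          simp
  have hsT : ∀ i, sval i ≤ (T:ℝ) := by
    intro i
    calc sval i ≤ ∑ j, sval j :=
          Finset.single_le_sum (fun j _ => hsval_nonneg j) (Finset.mem_univ i)
      _ ≤ (T:ℝ) := hsum_sval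
  have hdetΛ : Λ.det = ∏ i : Fin N, lamSeq ((i:ℕ) + 1) := by
    rw [hΛdef, Matrix.det_diagonal]
  have hdetΛpos : 0 < Λ.det := hΛ_pd.det_pos
  -- the ratio bound
  have hratio : (Λ + S).det / Λ.det ≤
      ∏ i : Fin N, (lamSeq ((i:ℕ) + 1) + sval i) / lamSeq ((i:ℕ) + 1) := by
    have h1 : (Λ + S).det ≤ ∏ i : Fin N, (lamSeq ((i:ℕ) + 1) + sval i) := by
      have := hadamard_det N (Λ + S) hV_pd.posSemidef
      calc (Λ + S).det ≤ ∏ i : Fin N, (Λ + S) i i := this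
        _ = ∏ i : Fin N, (lamSeq ((i:ℕ) + 1) + sval i) :=
            Finset.prod_congr rfl fun i _ => hVdiag i
    rw [hdetΛ] at hdetΛpos
    calc (Λ + S).det / Λ.det ≤ (∏ i : Fin N, (lamSeq ((i:ℕ) + 1) + sval i)) / Λ.det := by
          rw [hdetΛ]
          rw [hdetΛ] at *
          exact div_le_div_of_nonneg_right h1 hdetΛpos.le
      _ = ∏ i : Fin N, (lamSeq ((i:ℕ) + 1) + sval i) / lamSeq ((i:ℕ) + 1) := by
          rw [hdetΛ, ← Finset.prod_div_distrib]
  have hterm_pos : ∀ i : Fin N, 0 < (lamSeq ((i:ℕ) + 1) + sval i) / lamSeq ((i:ℕ) + 1) := by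
    intro i
    apply div_pos _ (hlamFpos i)
    have := hsval_nonneg i; have := hlamFpos i; linarith
  have hlog1 : Real.log ((Λ + S).det / Λ.det) ≤
      ∑ i : Fin N, Real.log ((lamSeq ((i:ℕ) + 1) + sval i) / lamSeq ((i:ℕ) + 1)) := by
    calc Real.log ((Λ + S).det / Λ.det) ≤
        Real.log (∏ i : Fin N, (lamSeq ((i:ℕ) + 1) + sval i) / lamSeq ((i:ℕ) + 1)) :=
          Real.log_le_log (div_pos hV_pd.det_pos hdetΛpos) hratio
      _ = ∑ i : Fin N, Real.log ((lamSeq ((i:ℕ) + 1) + sval i) / lamSeq ((i:ℕ) + 1)) :=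
          Real.log_prod fun i _ => (hterm_pos i).ne'
  set g : Fin N → ℝ := fun i => Real.log ((lamSeq ((i:ℕ) + 1) + sval i) / lamSeq ((i:ℕ) + 1))
    with hgdef
  have hgle : ∀ i, g i ≤ L := by
    intro i
    have hratio2 : (lamSeq ((i:ℕ) + 1) + sval i) / lamSeq ((i:ℕ) + 1) ≤ 1 + (T:ℝ) / lam := by
      rw [div_le_iff₀ (hlamFpos i)]
      have h1 : (T:ℝ) / lam * lam = T := div_mul_cancel₀ _ hlam.ne'
      have h2 : 0 ≤ (T:ℝ) / lam * (lamSeq ((i:ℕ) + 1) - lam) :=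
        mul_nonneg (div_nonneg hTpos.le hlam.le) (by linarith [hlamF i])
      have := hsT i
      nlinarith
    exact Real.log_le_log (hterm_pos i) hratio2
  -- split
  rcases Finset.sum_filter_add_sum_filter_not Finset.univ (fun i : Fin N => (i:ℕ) + 1 ≤ d) g
    with hsplit
  have hA : ∑ i ∈ Finset.univ.filter (fun i : Fin N => (i:ℕ) + 1 ≤ d), g i ≤ d * L := by
    calc ∑ i ∈ Finset.univ.filter (fun i : Fin N => (i:ℕ) + 1 ≤ d), g i
        ≤ ∑ _i ∈ Finset.univ.filter (fun i : Fin N => (i:ℕ) + 1 ≤ d), L :=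
          Finset.sum_le_sum fun i _ => hgle i
      _ = (Finset.univ.filter (fun i : Fin N => (i:ℕ) + 1 ≤ d)).card * L := by
          rw [Finset.sum_const, nsmul_eq_mul]
      _ ≤ d * L := by
          apply mul_le_mul_of_nonneg_right _ hL.le
          have hcard : (Finset.univ.filter (fun i : Fin N => (i:ℕ) + 1 ≤ d)).card ≤ d := by
            have := Finset.card_le_card_of_injOn (s := Finset.univ.filter (fun i : Fin N => (i:ℕ) + 1 ≤ d)) (t := Finset.range d) (fun i : Fin N => (i:ℕ))
              (fun i hi => by
                have h2 := (Finset.mem_filter.mp hi).2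
                show (i:ℕ) ∈ Finset.range d
                exact Finset.mem_range.mpr (by omega))
              (Fin.val_injective.injOn)
            simpa using this
          exact_mod_cast hcard
  have hB : ∑ i ∈ Finset.univ.filter (fun i : Fin N => ¬((i:ℕ) + 1 ≤ d)), g i ≤ d * L := by
    rcases lt_or_ge d N with hdlt | hge
    · -- d < N
      have hlam' : 0 < lamSeq (d + 1) :=
        lt_of_lt_of_le hlam (by rw [← hfirst]; exact hmono 1 (d+1) le_rfl (by omega) (by omega))
      have hmax : ¬ (((d + 1 : ℕ) : ℝ) - 1) * lamSeq (d + 1) ≤ (T:ℝ) / L := by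
        intro h
        have := hdmax (d+1) (by omega) (by omega) h
        omega
      push_neg at hmax
      have hmax' : (T:ℝ) / L < (d:ℝ) * lamSeq (d + 1) := by
        have : (((d + 1 : ℕ) : ℝ) - 1) = (d:ℝ) := by push_cast; ring
        rwa [this] at hmax
      have hTd : (T:ℝ) / lamSeq (d + 1) ≤ (d:ℝ) * L := by
        rw [div_le_iff₀ hlam']
        rw [div_lt_iff₀ hL] at hmax'
        nlinarith
      have hg_tail : ∀ i : Fin N, ¬((i:ℕ) + 1 ≤ d) → g i ≤ sval i / lamSeq (d + 1) := by
        intro i hi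
        have hstep1 : g i ≤ sval i / lamSeq ((i:ℕ) + 1) := by
          have h1 := Real.log_le_sub_one_of_pos (hterm_pos i)
          have h2 : (lamSeq ((i:ℕ) + 1) + sval i) / lamSeq ((i:ℕ) + 1) - 1 =
              sval i / lamSeq ((i:ℕ) + 1) := by
            have hne := (hlamFpos i).ne'
            rw [div_sub_one hne]; ring
          exact le_of_le_of_eq h1 h2
        have hstep2 : sval i / lamSeq ((i:ℕ) + 1) ≤ sval i / lamSeq (d + 1) := by
          apply div_le_div_of_nonneg_left (hsval_nonneg i) hlam'
          exact hmono (d+1) ((i:ℕ)+1) (by omega) (by omega) (by omega)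
        linarith
      calc ∑ i ∈ Finset.univ.filter (fun i : Fin N => ¬((i:ℕ) + 1 ≤ d)), g i
          ≤ ∑ i ∈ Finset.univ.filter (fun i : Fin N => ¬((i:ℕ) + 1 ≤ d)),
              sval i / lamSeq (d + 1) := by
            apply Finset.sum_le_sum
            intro i hi
            exact hg_tail i (Finset.mem_filter.mp hi).2
        _ = (∑ i ∈ Finset.univ.filter (fun i : Fin N => ¬((i:ℕ) + 1 ≤ d)), sval i) /
              lamSeq (d + 1) := by rw [Finset.sum_div]
        _ ≤ (∑ i, sval i) / lamSeq (d + 1) := by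
            apply div_le_div_of_nonneg_right _ hlam'.le
            exact Finset.sum_le_sum_of_subset_of_nonneg (Finset.filter_subset _ _)
              (fun i _ _ => hsval_nonneg i)
        _ ≤ (T:ℝ) / lamSeq (d + 1) := div_le_div_of_nonneg_right hsum_sval hlam'.le
        _ ≤ (d:ℝ) * L := hTd
    · -- N ≤ d, so filter is empty
      have hempty : Finset.univ.filter (fun i : Fin N => ¬((i:ℕ) + 1 ≤ d)) = ∅ := by
        apply Finset.filter_eq_empty_iff.mpr
        intro i _
        simp only [not_not]
        omega
      rw [hempty, Finset.sum_empty]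
      positivity
  calc Real.log ((Λ + S).det / Λ.det) ≤ ∑ i, g i := hlog1
    _ = _ + _ := hsplit.symm
    _ ≤ d * L + d * L := add_le_add hA hB
    _ = 2 * d * L := by ring
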